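/- Sewing lemma (Lemma A.1): Let W be a complete normed real vector space, T > 0, and let 0 < α ≤ 1 < β be real numbers. Let Ξ be a W-valued function on the simplex {(s,t) : 0 ≤ s ≤ t ≤ T} such that Ξ_{t,t} = 0 for all t, ‖Ξ_{s,t}‖ ≤ C₁·(t−s)^α for all s ≤ t, and ‖Ξ_{s,t} − Ξ_{s,u} − Ξ_{u,t}‖ ≤ C₂·(t−s)^β for all s ≤ u ≤ t. Then there exists a function I : [0,T] → W with I_0 = 0 and a constant K depending only on β such that ‖I_t − I_s − Ξ_{s,t}‖ ≤ K·C₂·(t−s)^β for all 0 ≤ s ≤ t ≤ T; moreover I is α-Hölder continuous, and I is the unique function with I_0 = 0 satisfying a bound of the form ‖I_t − I_s − Ξ_{s,t}‖ ≤ C₃·(t−s)^β for some constant C₃. -/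

import Mathlib

open Finset Filter Topology


lemma sew_sum_pair {W : Type} [AddCommGroup W] (f : ℕ → W) (N : ℕ) :
    ∑ k ∈ Finset.range (2 * N), f k = ∑ j ∈ Finset.range N, (f (2 * j) + f (2 * j + 1)) := by
  induction N with
  | zero => simp
  | succ n ih =>
      have h2 : 2 * (n + 1) = (2 * n + 1) + 1 := by ring
      rw [h2, Finset.sum_range_succ, Finset.sum_range_succ, ih, Finset.sum_range_succ]
      abel

lemma sew_clamp_sub_le (t a b : ℝ) (h : a ≤ b) : min t b - min t a ≤ b - a := by
  rcases le_total t a with h1 | h1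
  · rw [min_eq_left h1, min_eq_left (h1.trans h)]; linarith
  · rw [min_eq_right h1]; have := min_le_right t b; have := min_le_left t b; linarith


lemma sew_young {W : Type} [NormedAddCommGroup W] [NormedSpace ℝ W]
    (T β : ℝ) (hβ : 1 < β) (Ξ : ℝ → ℝ → W) (C₂ : ℝ) (hC₂ : 0 ≤ C₂)
    (hzero : ∀ x : ℝ, 0 ≤ x → x ≤ T → Ξ x x = 0)
    (hco : ∀ s u t : ℝ, 0 ≤ s → s ≤ u → u ≤ t → t ≤ T →
      ‖Ξ s t - Ξ s u - Ξ u t‖ ≤ C₂ * (t - s) ^ β) :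
    ∀ M : ℕ, ∀ u : ℕ → ℝ, (∀ j k : ℕ, j ≤ k → k ≤ M → u j ≤ u k) → 0 ≤ u 0 → u M ≤ T →
      ‖(∑ k ∈ Finset.range M, Ξ (u k) (u (k + 1))) - Ξ (u 0) (u M)‖ ≤
        2 ^ β * C₂ * (u M - u 0) ^ β * ∑ k ∈ Finset.range M, ((k : ℝ)) ^ (-β) := by
  intro M
  induction M with
  | zero =>
      intro u hm h0 hT'
      simp only [Finset.range_zero, Finset.sum_empty, zero_sub, norm_neg, mul_zero]
      rw [hzero (u 0) h0 hT', norm_zero]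
  | succ M ih =>
      intro u hm h0 hT'
      rcases Nat.eq_zero_or_pos M with hM0 | hMpos
      · subst hM0
        rw [Finset.sum_range_one, sub_self, norm_zero]
        have h1 : 0 ≤ u 1 - u 0 := sub_nonneg.2 (hm 0 1 (by omega) (by omega))
        have : (0:ℝ) ≤ (u 1 - u 0) ^ β := Real.rpow_nonneg h1 β
        have h2 : (0:ℝ) ≤ 2 ^ β := Real.rpow_nonneg (by norm_num) β
        have h3 : (0:ℝ) ≤ ∑ k ∈ Finset.range 1, ((k : ℝ)) ^ (-β) := by
          apply Finset.sum_nonneg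
          intro i _
          exact Real.rpow_nonneg (Nat.cast_nonneg i) _
        positivity
      · set L := u (M + 1) - u 0 with hLdef
        have hLnn : 0 ≤ L := sub_nonneg.2 (hm 0 (M + 1) (Nat.zero_le _) le_rfl)
        -- choose the removal point
        have hsum : ∑ k ∈ Finset.range M, (u (k + 2) - u k)
            ≤ ∑ _k ∈ Finset.range M, (2 * L / M) := by
          have e1 : ∑ k ∈ Finset.range M, (u (k + 2) - u k)
              = (u (M + 1) - u 1) + (u M - u 0) := by
            calc ∑ k ∈ Finset.range M, (u (k + 2) - u k)
                = ∑ k ∈ Finset.range M, ((u (k + 1 + 1) - u (k + 1)) + (u (k + 1) - u k)) := by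
                  apply Finset.sum_congr rfl; intro k _; ring_nf
              _ = (∑ k ∈ Finset.range M, (u (k + 1 + 1) - u (k + 1)))
                  + ∑ k ∈ Finset.range M, (u (k + 1) - u k) := Finset.sum_add_distrib
              _ = (u (M + 1) - u 1) + (u M - u 0) := by
                  rw [Finset.sum_range_sub (fun k => u (k + 1)) M, Finset.sum_range_sub u M]
          rw [e1, Finset.sum_const, Finset.card_range, nsmul_eq_mul]
          have h1 : u 0 ≤ u 1 := hm 0 1 (by omega) (by omega)
          have h2 : u M ≤ u (M + 1) := hm M (M + 1) (by omega) (by omega)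
          have hM' : (0:ℝ) < (M:ℝ) := by exact_mod_cast hMpos
          have : (M:ℝ) * (2 * L / M) = 2 * L := by field_simp
          rw [this]
          simp only [hLdef]; linarith
        obtain ⟨k₀, hk₀mem, hk₀⟩ :=
          Finset.exists_le_of_sum_le ⟨0, Finset.mem_range.2 hMpos⟩ hsum
        have hk₀M : k₀ < M := Finset.mem_range.1 hk₀mem
        set v : ℕ → ℝ := fun k => if k < k₀ + 1 then u k else u (k + 1) with hv
        have hv0 : v 0 = u 0 := by simp [hv]
        have hvM : v M = u (M + 1) := by
          simp only [hv]; rw [if_neg (by omega)]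
        have hvm : ∀ j k : ℕ, j ≤ k → k ≤ M → v j ≤ v k := by
          intro j k hjk hkM
          simp only [hv]
          split <;> split <;>
            · apply hm <;> omega
        have hmono : ∀ j k : ℕ, j ≤ k → k ≤ M + 1 → u j ≤ u k := hm
        -- sum surgery identity
        set f : ℕ → W := fun k => Ξ (u k) (u (k + 1)) with hf
        have e2 : ∑ k ∈ Finset.range (M + 1), f k
            = (∑ k ∈ Finset.range M, Ξ (v k) (v (k + 1)))
              + (f k₀ + f (k₀ + 1) - Ξ (u k₀) (u (k₀ + 2))) := by
          have split1 : ∑ k ∈ Finset.range (M + 1), f k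
              = (∑ k ∈ Finset.Ico 0 k₀, f k) + f k₀ + f (k₀ + 1)
                + ∑ k ∈ Finset.Ico (k₀ + 2) (M + 1), f k := by
            rw [Finset.range_eq_Ico,
              ← Finset.sum_Ico_consecutive f (Nat.zero_le k₀) (by omega : k₀ ≤ M + 1),
              Finset.sum_eq_sum_Ico_succ_bot (by omega : k₀ < M + 1) f,
              Finset.sum_eq_sum_Ico_succ_bot (by omega : k₀ + 1 < M + 1) f]
            ring_nf
            abel
          have split2 : ∑ k ∈ Finset.range M, Ξ (v k) (v (k + 1))
              = (∑ k ∈ Finset.Ico 0 k₀, f k) + Ξ (u k₀) (u (k₀ + 2))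
                + ∑ k ∈ Finset.Ico (k₀ + 2) (M + 1), f k := by
            rw [Finset.range_eq_Ico,
              ← Finset.sum_Ico_consecutive (fun k => Ξ (v k) (v (k + 1)))
                (Nat.zero_le k₀) (by omega : k₀ ≤ M),
              Finset.sum_eq_sum_Ico_succ_bot (by omega : k₀ < M)
                (fun k => Ξ (v k) (v (k + 1)))]
            have c1 : ∑ k ∈ Finset.Ico 0 k₀, Ξ (v k) (v (k + 1)) = ∑ k ∈ Finset.Ico 0 k₀, f k := by
              apply Finset.sum_congr rfl
              intro k hk
              have hk' : k < k₀ := (Finset.mem_Ico.1 hk).2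
              simp only [hv, hf, if_pos (by omega : k < k₀ + 1), if_pos (by omega : k + 1 < k₀ + 1)]
            have c2 : Ξ (v k₀) (v (k₀ + 1)) = Ξ (u k₀) (u (k₀ + 2)) := by
              simp only [hv, if_pos (by omega : k₀ < k₀ + 1), if_neg (by omega : ¬ k₀ + 1 < k₀ + 1)]
            have c3 : ∑ k ∈ Finset.Ico (k₀ + 1) M, Ξ (v k) (v (k + 1))
                = ∑ k ∈ Finset.Ico (k₀ + 2) (M + 1), f k := by
              rw [Finset.sum_Ico_eq_sum_range, Finset.sum_Ico_eq_sum_range]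
              have hcard : M - (k₀ + 1) = M + 1 - (k₀ + 2) := by omega
              rw [← hcard]
              apply Finset.sum_congr rfl
              intro i _
              simp only [hv, hf, if_neg (by omega : ¬ k₀ + 1 + i < k₀ + 1),
                if_neg (by omega : ¬ k₀ + 1 + i + 1 < k₀ + 1)]
              congr 2 <;> omega
            rw [c1, c2, c3]; abel
          rw [split1, split2]
          abel
        -- the coboundary cost
        have hu0k : 0 ≤ u k₀ := h0.trans (hm 0 k₀ (Nat.zero_le _) (by omega))
        have huk2T : u (k₀ + 2) ≤ T := (hm (k₀ + 2) (M + 1) (by omega) le_rfl).trans hT'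
        have hcob : ‖f k₀ + f (k₀ + 1) - Ξ (u k₀) (u (k₀ + 2))‖
            ≤ C₂ * (u (k₀ + 2) - u k₀) ^ β := by
          have h := hco (u k₀) (u (k₀ + 1)) (u (k₀ + 2)) hu0k
            (hm k₀ (k₀ + 1) (by omega) (by omega)) (hm (k₀ + 1) (k₀ + 2) (by omega) (by omega))
            huk2T
          calc ‖f k₀ + f (k₀ + 1) - Ξ (u k₀) (u (k₀ + 2))‖
              = ‖Ξ (u k₀) (u (k₀ + 2)) - Ξ (u k₀) (u (k₀ + 1)) - Ξ (u (k₀ + 1)) (u (k₀ + 2))‖ := by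
                rw [← norm_neg]; congr 1; simp only [hf]
                have : k₀ + 1 + 1 = k₀ + 2 := by omega
                rw [this]; abel
            _ ≤ C₂ * (u (k₀ + 2) - u k₀) ^ β := h
        have hcost : C₂ * (u (k₀ + 2) - u k₀) ^ β ≤ 2 ^ β * C₂ * L ^ β * ((M : ℝ)) ^ (-β) := by
          have hd : 0 ≤ u (k₀ + 2) - u k₀ :=
            sub_nonneg.2 (hm k₀ (k₀ + 2) (by omega) (by omega))
          have hM' : (0:ℝ) < (M:ℝ) := by exact_mod_cast hMpos
          have h1 : (u (k₀ + 2) - u k₀) ^ β ≤ (2 * L / M) ^ β :=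
            Real.rpow_le_rpow hd hk₀ (by linarith)
          have h2 : (2 * L / M : ℝ) ^ β = 2 ^ β * L ^ β * ((M : ℝ)) ^ (-β) := by
            rw [Real.div_rpow (by linarith) hM'.le, Real.mul_rpow (by norm_num) hLnn,
              Real.rpow_neg hM'.le]
            ring
          calc C₂ * (u (k₀ + 2) - u k₀) ^ β ≤ C₂ * (2 * L / M) ^ β := by
                apply mul_le_mul_of_nonneg_left h1 hC₂
            _ = 2 ^ β * C₂ * L ^ β * ((M : ℝ)) ^ (-β) := by rw [h2]; ring
        -- apply IH to v
        have hih := ih v hvm (by rw [hv0]; exact h0) (by rw [hvM]; exact hT')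
        rw [hv0, hvM] at hih
        -- assemble
        have key : ‖(∑ k ∈ Finset.range (M + 1), f k) - Ξ (u 0) (u (M + 1))‖
            ≤ 2 ^ β * C₂ * L ^ β * (∑ k ∈ Finset.range M, ((k : ℝ)) ^ (-β))
              + 2 ^ β * C₂ * L ^ β * ((M : ℝ)) ^ (-β) := by
          rw [e2]
          have : (∑ k ∈ Finset.range M, Ξ (v k) (v (k + 1)))
              + (f k₀ + f (k₀ + 1) - Ξ (u k₀) (u (k₀ + 2))) - Ξ (u 0) (u (M + 1))
              = ((∑ k ∈ Finset.range M, Ξ (v k) (v (k + 1))) - Ξ (u 0) (u (M + 1)))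
                + (f k₀ + f (k₀ + 1) - Ξ (u k₀) (u (k₀ + 2))) := by abel
          rw [this]
          calc _ ≤ ‖(∑ k ∈ Finset.range M, Ξ (v k) (v (k + 1))) - Ξ (u 0) (u (M + 1))‖
                + ‖f k₀ + f (k₀ + 1) - Ξ (u k₀) (u (k₀ + 2))‖ := norm_add_le _ _
            _ ≤ _ := add_le_add hih (hcob.trans hcost)
        rw [Finset.sum_range_succ ((fun k => ((k : ℝ)) ^ (-β))) M]
        calc ‖(∑ k ∈ Finset.range (M + 1), Ξ (u k) (u (k + 1))) - Ξ (u 0) (u (M + 1))‖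
            = ‖(∑ k ∈ Finset.range (M + 1), f k) - Ξ (u 0) (u (M + 1))‖ := rfl
          _ ≤ _ := key
          _ = 2 ^ β * C₂ * (u (M + 1) - u 0) ^ β
              * ((∑ k ∈ Finset.range M, ((k : ℝ)) ^ (-β)) + ((M : ℝ)) ^ (-β)) := by
              rw [hLdef]; ring

set_option maxHeartbeats 1600000

/-- the sewing lemma.  For `0 < α ≤ 1 < β` there is a constant `K`
depending only on `β` such that: for every complete normed real vector space
`W` and every `Ξ` on the simplex of `[0,T]` with `Ξ_{t,t} = 0`,
`‖Ξ_{s,t}‖ ≤ C₁ (t−s)^α` and `‖Ξ_{s,t} − Ξ_{s,u} − Ξ_{u,t}‖ ≤ C₂ (t−s)^β`,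
there is a function `I : [0,T] → W` with `I_0 = 0` and
`‖I_t − I_s − Ξ_{s,t}‖ ≤ K C₂ (t−s)^β`; moreover `I` is `α`-Hölder and is the
unique such function with `I_0 = 0` admitting a bound of this form. -/
theorem sewing_lemma (T α β : ℝ) (hT : 0 < T) (hα0 : 0 < α) (hα1 : α ≤ 1) (hβ : 1 < β) :
    ∃ K : ℝ, ∀ (W : Type) [NormedAddCommGroup W] [NormedSpace ℝ W] [CompleteSpace W]
      (Ξ : ℝ → ℝ → W) (C₁ C₂ : ℝ),
      (∀ t ∈ Set.Icc (0 : ℝ) T, Ξ t t = 0) →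
      (∀ s t : ℝ, 0 ≤ s → s ≤ t → t ≤ T → ‖Ξ s t‖ ≤ C₁ * (t - s) ^ α) →
      (∀ s u t : ℝ, 0 ≤ s → s ≤ u → u ≤ t → t ≤ T →
        ‖Ξ s t - Ξ s u - Ξ u t‖ ≤ C₂ * (t - s) ^ β) →
      ∃ I : ℝ → W, I 0 = 0 ∧
        (∀ s t : ℝ, 0 ≤ s → s ≤ t → t ≤ T →
          ‖I t - I s - Ξ s t‖ ≤ K * C₂ * (t - s) ^ β) ∧
        (∃ L : ℝ, ∀ s t : ℝ, 0 ≤ s → s ≤ t → t ≤ T →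
          ‖I t - I s‖ ≤ L * (t - s) ^ α) ∧
        (∀ J : ℝ → W, J 0 = 0 →
          (∃ C₃ : ℝ, ∀ s t : ℝ, 0 ≤ s → s ≤ t → t ≤ T →
            ‖J t - J s - Ξ s t‖ ≤ C₃ * (t - s) ^ β) →
          ∀ t ∈ Set.Icc (0 : ℝ) T, J t = I t) := by
  have hβ0 : (0:ℝ) < β := by linarith
  have hsummable : Summable (fun k : ℕ => ((k:ℝ)) ^ (-β)) :=
    Real.summable_nat_rpow.mpr (by linarith)
  set Z := ∑' k : ℕ, ((k:ℝ)) ^ (-β) with hZ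
  have hZnn : 0 ≤ Z := tsum_nonneg (fun k => Real.rpow_nonneg (Nat.cast_nonneg k) _)
  have hpart : ∀ M : ℕ, ∑ k ∈ Finset.range M, ((k:ℝ)) ^ (-β) ≤ Z := fun M =>
    Summable.sum_le_tsum (Finset.range M) (fun i _ => Real.rpow_nonneg (Nat.cast_nonneg i) _) hsummable
  have h2βnn : (0:ℝ) ≤ 2 ^ β := Real.rpow_nonneg (by norm_num) β
  refine ⟨2 ^ β * Z, ?_⟩
  intro W _ _ _ Ξ C₁ C₂ hzero hΞ hco
  have hzero' : ∀ x : ℝ, 0 ≤ x → x ≤ T → Ξ x x = 0 := fun x h1 h2 => hzero x ⟨h1, h2⟩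
  have hC₂ : 0 ≤ C₂ := by
    have h := hco 0 0 T le_rfl le_rfl hT.le le_rfl
    rw [hzero' 0 le_rfl hT.le, sub_zero, sub_self, norm_zero, sub_zero] at h
    nlinarith [Real.rpow_pos_of_pos hT β]
  -- the dyadic grid on [0,T]
  set g : ℕ → ℕ → ℝ := fun n k => (k : ℝ) * T / 2 ^ n with hg
  have hgnn : ∀ n k, 0 ≤ g n k := by
    intro n k; simp only [hg]; positivity
  have hgmono : ∀ n, ∀ j k : ℕ, j ≤ k → g n j ≤ g n k := by
    intro n j k hjk
    have hc : (j:ℝ) ≤ k := by exact_mod_cast hjk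
    simp only [hg]
    gcongr
  have hg0 : ∀ n, g n 0 = 0 := by intro n; simp [hg]
  have hgT : ∀ n, g n (2 ^ n) = T := by
    intro n
    simp only [hg]
    have h2n : ((2:ℝ)) ^ n ≠ 0 := by positivity
    push_cast
    field_simp
  have hgstep : ∀ n k, g n (k + 1) - g n k = T / 2 ^ n := by
    intro n k
    simp only [hg]
    push_cast
    ring
  have hgdouble : ∀ n k, g (n + 1) (2 * k) = g n k := by
    intro n k
    simp only [hg]
    have h2n : ((2:ℝ)) ^ n ≠ 0 := by positivity
    push_cast
    rw [pow_succ]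
    field_simp
  -- partial "sewing" sums
  set S : ℕ → ℝ → W := fun n t =>
    ∑ k ∈ Finset.range (2 ^ n), Ξ (min t (g n k)) (min t (g n (k + 1))) with hS
  -- arithmetic helpers
  have harith : ∀ n : ℕ, ((2:ℝ) ^ n) * (C₂ * (T / 2 ^ n) ^ β)
      = (C₂ * T ^ β) * ((2:ℝ) ^ ((1:ℝ) - β)) ^ n := by
    intro n
    have e1 : ((2:ℝ) ^ ((1:ℝ) - β)) ^ n = (2:ℝ) ^ ((1:ℝ) * n - β * n) := by
      rw [← Real.rpow_natCast ((2:ℝ) ^ ((1:ℝ) - β)) n,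
        ← Real.rpow_mul (by norm_num : (0:ℝ) ≤ 2)]
      congr 1; ring
    have e2 : (((2:ℝ) ^ n : ℝ)) ^ β = (2:ℝ) ^ (β * n) := by
      rw [← Real.rpow_natCast (2:ℝ) n, ← Real.rpow_mul (by norm_num : (0:ℝ) ≤ 2)]
      congr 1; ring
    have e3 : (2:ℝ) ^ ((1:ℝ) * n) = (2:ℝ) ^ n := by
      rw [one_mul, Real.rpow_natCast]
    rw [Real.div_rpow hT.le (by positivity : (0:ℝ) ≤ (2:ℝ) ^ n), e1, e2,
      Real.rpow_sub (by norm_num : (0:ℝ) < 2), e3]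
    have h2 : (2:ℝ) ^ (β * (n:ℝ)) ≠ 0 := by
      exact ne_of_gt (Real.rpow_pos_of_pos (by norm_num) _)
    field_simp
  have harith2 : ∀ n : ℕ, (T / 2 ^ n) ^ β = T ^ β * ((2:ℝ) ^ (-β)) ^ n := by
    intro n
    have e1 : ((2:ℝ) ^ (-β)) ^ n = (2:ℝ) ^ (-(β * n)) := by
      rw [← Real.rpow_natCast ((2:ℝ) ^ (-β)) n, ← Real.rpow_mul (by norm_num : (0:ℝ) ≤ 2)]
      congr 1; ring
    have e2 : (((2:ℝ) ^ n : ℝ)) ^ β = (2:ℝ) ^ (β * n) := by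
      rw [← Real.rpow_natCast (2:ℝ) n, ← Real.rpow_mul (by norm_num : (0:ℝ) ≤ 2)]
      congr 1; ring
    rw [Real.div_rpow hT.le (by positivity : (0:ℝ) ≤ (2:ℝ) ^ n), e1, e2,
      Real.rpow_neg (by norm_num : (0:ℝ) ≤ 2)]
    ring
  -- Cauchy estimate for the dyadic sums
  have hcauchy_bound : ∀ t : ℝ, 0 ≤ t → t ≤ T → ∀ n : ℕ,
      dist (S n t) (S (n + 1) t) ≤ (C₂ * T ^ β) * ((2:ℝ) ^ ((1:ℝ) - β)) ^ n := by
    intro t ht0 htT n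
    rw [dist_eq_norm]
    have hpair : S (n + 1) t = ∑ j ∈ Finset.range (2 ^ n),
        (Ξ (min t (g (n + 1) (2 * j))) (min t (g (n + 1) (2 * j + 1)))
          + Ξ (min t (g (n + 1) (2 * j + 1))) (min t (g (n + 1) (2 * j + 1 + 1)))) := by
      simp only [hS]
      rw [(by ring : 2 ^ (n + 1) = 2 * 2 ^ n),
        sew_sum_pair (fun k => Ξ (min t (g (n + 1) k)) (min t (g (n + 1) (k + 1)))) (2 ^ n)]
    have hSn : S n t = ∑ j ∈ Finset.range (2 ^ n),
        Ξ (min t (g (n + 1) (2 * j))) (min t (g (n + 1) (2 * j + 1 + 1))) := by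
      simp only [hS]
      apply Finset.sum_congr rfl
      intro j _
      rw [hgdouble n j, (by ring : 2 * j + 1 + 1 = 2 * (j + 1)), hgdouble n (j + 1)]
    rw [hSn, hpair, ← Finset.sum_sub_distrib]
    calc ‖∑ j ∈ Finset.range (2 ^ n),
          (Ξ (min t (g (n + 1) (2 * j))) (min t (g (n + 1) (2 * j + 1 + 1)))
            - (Ξ (min t (g (n + 1) (2 * j))) (min t (g (n + 1) (2 * j + 1)))
              + Ξ (min t (g (n + 1) (2 * j + 1))) (min t (g (n + 1) (2 * j + 1 + 1)))))‖
        ≤ ∑ j ∈ Finset.range (2 ^ n), C₂ * (T / 2 ^ n) ^ β := by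
          apply norm_sum_le_of_le
          intro j _
          set a := min t (g (n + 1) (2 * j))
          set m := min t (g (n + 1) (2 * j + 1))
          set b := min t (g (n + 1) (2 * j + 1 + 1))
          have ha0 : 0 ≤ a := le_min ht0 (hgnn _ _)
          have ham : a ≤ m := min_le_min le_rfl (hgmono _ _ _ (by omega))
          have hmb : m ≤ b := min_le_min le_rfl (hgmono _ _ _ (by omega))
          have hbT : b ≤ T := (min_le_left _ _).trans htT
          have h := hco a m b ha0 ham hmb hbT
          have hd : b - a ≤ T / 2 ^ n := by
            have h1 : b - a ≤ g (n + 1) (2 * j + 1 + 1) - g (n + 1) (2 * j) :=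
              sew_clamp_sub_le t _ _ (hgmono _ _ _ (by omega))
            have h2 : g (n + 1) (2 * j + 1 + 1) - g (n + 1) (2 * j) = T / 2 ^ n := by
              rw [(by ring : 2 * j + 1 + 1 = 2 * (j + 1)), hgdouble n (j + 1), hgdouble n j,
                ← hgstep n j]
            linarith
          calc ‖Ξ a b - (Ξ a m + Ξ m b)‖ = ‖Ξ a b - Ξ a m - Ξ m b‖ := by
                congr 1; abel
            _ ≤ C₂ * (b - a) ^ β := h
            _ ≤ C₂ * (T / 2 ^ n) ^ β := by
                apply mul_le_mul_of_nonneg_left _ hC₂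
                exact Real.rpow_le_rpow (by linarith) hd hβ0.le
      _ = (C₂ * T ^ β) * ((2:ℝ) ^ ((1:ℝ) - β)) ^ n := by
          rw [Finset.sum_const, Finset.card_range, nsmul_eq_mul, ← harith n]
          push_cast
          ring
  -- existence of the limit
  have hr1 : (2:ℝ) ^ ((1:ℝ) - β) < 1 :=
    Real.rpow_lt_one_of_one_lt_of_neg (by norm_num) (by linarith)
  have hex : ∀ t : ℝ, t ∈ Set.Icc (0:ℝ) T → ∃ x : W, Tendsto (fun n => S n t) atTop (𝓝 x) := by
    intro t ht
    exact cauchySeq_tendsto_of_complete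
      (cauchySeq_of_le_geometric _ (C₂ * T ^ β) hr1 (hcauchy_bound t ht.1 ht.2))
  obtain ⟨I, hI⟩ : ∃ I : ℝ → W, ∀ t, t ∈ Set.Icc (0:ℝ) T →
      Tendsto (fun n => S n t) atTop (𝓝 (I t)) := by
    refine ⟨fun t => if h : t ∈ Set.Icc (0:ℝ) T then (hex t h).choose else 0, ?_⟩
    intro t h
    simp only [dif_pos h]
    exact (hex t h).choose_spec
  have hI0 : I 0 = 0 := by
    have hS0 : ∀ n, S n 0 = 0 := by
      intro n
      simp only [hS]
      apply Finset.sum_eq_zero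
      intro k _
      rw [min_eq_left (hgnn n k), min_eq_left (hgnn n (k + 1))]
      exact hzero' 0 le_rfl hT.le
    have h1 := hI 0 ⟨le_rfl, hT.le⟩
    have h2 : Tendsto (fun n => S n 0) atTop (𝓝 (0:W)) := by
      simp only [hS0]; exact tendsto_const_nhds
    exact tendsto_nhds_unique h1 h2
  -- the main estimate
  have hmain : ∀ s t : ℝ, 0 ≤ s → s ≤ t → t ≤ T →
      ‖I t - I s - Ξ s t‖ ≤ 2 ^ β * Z * C₂ * (t - s) ^ β := by
    intro s t hs hst htT
    rcases eq_or_lt_of_le hst with heq | hlt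
    · subst heq
      rw [hzero' s hs htT, sub_zero, sub_self, norm_zero, sub_self,
        Real.zero_rpow (by linarith : β ≠ 0), mul_zero]
    · have ht0 : (0:ℝ) ≤ t := hs.trans hst
      have hsT : s < T := lt_of_lt_of_le hlt htT
      have hbound : ∀ n : ℕ, ‖S n t - S n s - Ξ s t‖
          ≤ 2 ^ β * Z * C₂ * (t - s) ^ β + C₂ * (T ^ β * ((2:ℝ) ^ (-β)) ^ n) := by
        intro n
        have h2npos : (0:ℝ) < 2 ^ n := by positivity
        set k₀ := ⌊s * 2 ^ n / T⌋₊ with hk₀def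
        have hsnn : (0:ℝ) ≤ s * 2 ^ n / T := by positivity
        have hk₀le : g n k₀ ≤ s := by
          have h1 : (k₀:ℝ) ≤ s * 2 ^ n / T := Nat.floor_le hsnn
          have h2 : (k₀:ℝ) * T ≤ s * 2 ^ n := by
            rw [← le_div_iff₀ hT]; exact h1
          simp only [hg]
          rw [div_le_iff₀ h2npos]
          linarith
        have hk₀lt : s < g n (k₀ + 1) := by
          have h1 : s * 2 ^ n / T < (k₀:ℝ) + 1 := Nat.lt_floor_add_one _
          have h2 : s * 2 ^ n < ((k₀:ℝ) + 1) * T := by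
            rw [div_lt_iff₀ hT] at h1; linarith
          simp only [hg]
          rw [lt_div_iff₀ h2npos]
          push_cast
          linarith
        have hk₀mem : k₀ < 2 ^ n := by
          rw [hk₀def]
          rw [Nat.floor_lt hsnn]
          push_cast
          rw [div_lt_iff₀ hT]
          nlinarith
        set v : ℕ → ℝ := fun k => max s (min t (g n k)) with hv
        have hv0 : v 0 = s := by
          simp only [hv, hg0 n]
          rw [min_eq_right ht0, max_eq_left hs]
        have hvN : v (2 ^ n) = t := by
          simp only [hv, hgT n]
          rw [min_eq_left htT, max_eq_right hst]
        have hvmono : ∀ j k : ℕ, j ≤ k → k ≤ 2 ^ n → v j ≤ v k := by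
          intro j k hjk _
          exact max_le_max le_rfl (min_le_min le_rfl (hgmono n j k hjk))
        have hY := sew_young T β hβ Ξ C₂ hC₂ hzero' hco (2 ^ n) v hvmono
          (by rw [hv0]; exact hs) (by rw [hvN]; exact htT)
        rw [hv0, hvN] at hY
        have hYZ : ‖(∑ k ∈ Finset.range (2 ^ n), Ξ (v k) (v (k + 1))) - Ξ s t‖
            ≤ 2 ^ β * Z * C₂ * (t - s) ^ β := by
          calc ‖(∑ k ∈ Finset.range (2 ^ n), Ξ (v k) (v (k + 1))) - Ξ s t‖
              ≤ 2 ^ β * C₂ * (t - s) ^ β * ∑ k ∈ Finset.range (2 ^ n), ((k:ℝ)) ^ (-β) := hY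
            _ ≤ 2 ^ β * C₂ * (t - s) ^ β * Z := by
                apply mul_le_mul_of_nonneg_left (hpart _)
                have : (0:ℝ) ≤ (t - s) ^ β := Real.rpow_nonneg (by linarith) β
                positivity
            _ = 2 ^ β * Z * C₂ * (t - s) ^ β := by ring
        -- the defect term
        set D : ℕ → W := fun k => Ξ (min t (g n k)) (min t (g n (k + 1)))
          - Ξ (min s (g n k)) (min s (g n (k + 1))) - Ξ (v k) (v (k + 1)) with hD
        have hsplit : S n t - S n s - (∑ k ∈ Finset.range (2 ^ n), Ξ (v k) (v (k + 1)))
            = ∑ k ∈ Finset.range (2 ^ n), D k := by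
          simp only [hS, hD]
          rw [← Finset.sum_sub_distrib, ← Finset.sum_sub_distrib]
        have hDzero : ∀ k ∈ Finset.range (2 ^ n), k ≠ k₀ → D k = 0 := by
          intro k _ hne
          rcases lt_or_gt_of_ne hne with hk | hk
          · have hb : g n (k + 1) ≤ s := (hgmono n (k + 1) k₀ (by omega)).trans hk₀le
            have ha : g n k ≤ s := (hgmono n k (k + 1) (by omega)).trans hb
            simp only [hD, hv]
            rw [min_eq_right (ha.trans hst), min_eq_right (hb.trans hst),
              min_eq_right ha, min_eq_right hb,
              max_eq_left ha, max_eq_left hb]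
            rw [hzero' s hs (hst.trans htT)]
            abel
          · have ha : s ≤ g n k := hk₀lt.le.trans (hgmono n (k₀ + 1) k (by omega))
            have hb : s ≤ g n (k + 1) := ha.trans (hgmono n k (k + 1) (by omega))
            simp only [hD, hv]
            rw [min_eq_left ha, min_eq_left hb,
              max_eq_right (le_min hst ha), max_eq_right (le_min hst hb)]
            rw [hzero' s hs (hst.trans htT)]
            abel
        have hDk₀ : ‖D k₀‖ ≤ C₂ * (T / 2 ^ n) ^ β := by
          have ha : g n k₀ ≤ s := hk₀le
          have hat : g n k₀ ≤ t := ha.trans hst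
          simp only [hD, hv]
          rw [min_eq_right hat, min_eq_right ha, min_eq_left hk₀lt.le,
            max_eq_left ha, max_eq_right (le_min hst hk₀lt.le)]
          have h1 := hco (g n k₀) s (min t (g n (k₀ + 1))) (hgnn n k₀) ha
            (le_min hst hk₀lt.le) ((min_le_left _ _).trans htT)
          calc ‖Ξ (g n k₀) (min t (g n (k₀ + 1))) - Ξ (g n k₀) s - Ξ s (min t (g n (k₀ + 1)))‖
              ≤ C₂ * (min t (g n (k₀ + 1)) - g n k₀) ^ β := h1
            _ ≤ C₂ * (T / 2 ^ n) ^ β := by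
                apply mul_le_mul_of_nonneg_left _ hC₂
                apply Real.rpow_le_rpow
                · have : g n k₀ ≤ min t (g n (k₀ + 1)) :=
                    le_min hat (hgmono n k₀ (k₀ + 1) (by omega))
                  linarith
                · have h3 : min t (g n (k₀ + 1)) ≤ g n (k₀ + 1) := min_le_right _ _
                  have h4 := hgstep n k₀
                  linarith
                · exact hβ0.le
        have hsum_eq : ∑ k ∈ Finset.range (2 ^ n), D k = D k₀ :=
          Finset.sum_eq_single_of_mem k₀ (Finset.mem_range.2 hk₀mem) hDzero
        have hdecomp : S n t - S n s - Ξ s t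
            = ((∑ k ∈ Finset.range (2 ^ n), Ξ (v k) (v (k + 1))) - Ξ s t) + D k₀ := by
          rw [← hsum_eq, ← hsplit]
          abel
        rw [hdecomp, ← harith2 n]
        calc ‖((∑ k ∈ Finset.range (2 ^ n), Ξ (v k) (v (k + 1))) - Ξ s t) + D k₀‖
            ≤ ‖(∑ k ∈ Finset.range (2 ^ n), Ξ (v k) (v (k + 1))) - Ξ s t‖ + ‖D k₀‖ :=
              norm_add_le _ _
          _ ≤ 2 ^ β * Z * C₂ * (t - s) ^ β + C₂ * (T / 2 ^ n) ^ β := add_le_add hYZ hDk₀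
      -- pass to the limit
      have hlim1 : Tendsto (fun n => ‖S n t - S n s - Ξ s t‖) atTop (𝓝 ‖I t - I s - Ξ s t‖) :=
        (((hI t ⟨ht0, htT⟩).sub (hI s ⟨hs, hst.trans htT⟩)).sub tendsto_const_nhds).norm
      have hr0 : (0:ℝ) ≤ (2:ℝ) ^ (-β) := Real.rpow_nonneg (by norm_num) _
      have hr1' : (2:ℝ) ^ (-β) < 1 :=
        Real.rpow_lt_one_of_one_lt_of_neg (by norm_num) (by linarith)
      have hlim2 : Tendsto
          (fun n : ℕ => 2 ^ β * Z * C₂ * (t - s) ^ β + C₂ * (T ^ β * ((2:ℝ) ^ (-β)) ^ n))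
          atTop (𝓝 (2 ^ β * Z * C₂ * (t - s) ^ β + C₂ * (T ^ β * 0))) := by
        apply Tendsto.add tendsto_const_nhds
        apply Tendsto.const_mul
        exact Tendsto.const_mul _ (tendsto_pow_atTop_nhds_zero_of_lt_one hr0 hr1')
      have := le_of_tendsto_of_tendsto' hlim1 hlim2 hbound
      simpa using this
  -- Hölder continuity
  have hHolder : ∀ s t : ℝ, 0 ≤ s → s ≤ t → t ≤ T →
      ‖I t - I s‖ ≤ (C₁ + 2 ^ β * Z * C₂ * T ^ (β - α)) * (t - s) ^ α := by
    intro s t hs hst htT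
    rcases eq_or_lt_of_le hst with heq | hlt
    · subst heq
      rw [sub_self, norm_zero, sub_self, Real.zero_rpow (by linarith : α ≠ 0), mul_zero]
    · have h1 : ‖I t - I s‖ ≤ ‖I t - I s - Ξ s t‖ + ‖Ξ s t‖ := by
        have := norm_add_le (I t - I s - Ξ s t) (Ξ s t)
        calc ‖I t - I s‖ = ‖(I t - I s - Ξ s t) + Ξ s t‖ := by congr 1; abel
          _ ≤ _ := this
      have h2 := hmain s t hs hst htT
      have h3 := hΞ s t hs hst htT
      have h4 : (t - s) ^ β = (t - s) ^ α * (t - s) ^ (β - α) := by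
        rw [← Real.rpow_add (by linarith : (0:ℝ) < t - s)]
        congr 1; ring
      have h5 : (t - s) ^ (β - α) ≤ T ^ (β - α) :=
        Real.rpow_le_rpow (by linarith) (by linarith) (by linarith)
      have h6 : (0:ℝ) ≤ (t - s) ^ α := Real.rpow_nonneg (by linarith) α
      have h7 : (0:ℝ) ≤ 2 ^ β * Z * C₂ := by positivity
      calc ‖I t - I s‖ ≤ ‖I t - I s - Ξ s t‖ + ‖Ξ s t‖ := h1
        _ ≤ 2 ^ β * Z * C₂ * (t - s) ^ β + C₁ * (t - s) ^ α := add_le_add h2 h3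
        _ = 2 ^ β * Z * C₂ * ((t - s) ^ (β - α) * (t - s) ^ α) + C₁ * (t - s) ^ α := by
            rw [h4]; ring
        _ ≤ 2 ^ β * Z * C₂ * (T ^ (β - α) * (t - s) ^ α) + C₁ * (t - s) ^ α := by
            refine add_le_add ?_ le_rfl
            apply mul_le_mul_of_nonneg_left _ h7
            exact mul_le_mul_of_nonneg_right h5 h6
        _ = (C₁ + 2 ^ β * Z * C₂ * T ^ (β - α)) * (t - s) ^ α := by ring
  -- uniqueness
  have huniq : ∀ J : ℝ → W, J 0 = 0 →
      (∃ C₃ : ℝ, ∀ s t : ℝ, 0 ≤ s → s ≤ t → t ≤ T →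
        ‖J t - J s - Ξ s t‖ ≤ C₃ * (t - s) ^ β) →
      ∀ t ∈ Set.Icc (0:ℝ) T, J t = I t := by
    intro J hJ0 hCex t ht
    obtain ⟨C₃, hC₃⟩ := hCex
    obtain ⟨ht0, htT⟩ := ht
    set c := C₃ + 2 ^ β * Z * C₂ with hc
    have hD : ∀ s' t' : ℝ, 0 ≤ s' → s' ≤ t' → t' ≤ T →
        ‖(J t' - I t') - (J s' - I s')‖ ≤ c * (t' - s') ^ β := by
      intro s' t' h1 h2 h3
      have ha := hC₃ s' t' h1 h2 h3
      have hb := hmain s' t' h1 h2 h3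
      calc ‖(J t' - I t') - (J s' - I s')‖
          = ‖(J t' - J s' - Ξ s' t') - (I t' - I s' - Ξ s' t')‖ := by congr 1; abel
        _ ≤ ‖J t' - J s' - Ξ s' t'‖ + ‖I t' - I s' - Ξ s' t'‖ := norm_sub_le _ _
        _ ≤ C₃ * (t' - s') ^ β + 2 ^ β * Z * C₂ * (t' - s') ^ β := add_le_add ha hb
        _ = c * (t' - s') ^ β := by rw [hc]; ring
    have hbound : ∀ n : ℕ, ‖J t - I t‖ ≤ c * t ^ β * ((n:ℝ) + 1) ^ ((1:ℝ) - β) := by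
      intro n
      have hn1 : (0:ℝ) < (n:ℝ) + 1 := by positivity
      set F : ℕ → W := fun k => J (t * k / ((n:ℝ) + 1)) - I (t * k / ((n:ℝ) + 1)) with hF
      have htel : ∑ k ∈ Finset.range (n + 1), (F (k + 1) - F k) = F (n + 1) - F 0 :=
        Finset.sum_range_sub F (n + 1)
      have hFn : F (n + 1) = J t - I t := by
        simp only [hF]
        have : t * ((n + 1 : ℕ):ℝ) / ((n:ℝ) + 1) = t := by
          push_cast
          field_simp
        rw [this]
      have hF0 : F 0 = 0 := by
        simp only [hF]
        norm_num
        rw [hJ0, hI0, sub_self]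
      have hterm : ∀ k ∈ Finset.range (n + 1),
          ‖F (k + 1) - F k‖ ≤ c * (t / ((n:ℝ) + 1)) ^ β := by
        intro k hk
        have hk' : (k:ℝ) + 1 ≤ (n:ℝ) + 1 := by
          have : k < n + 1 := Finset.mem_range.1 hk
          have : (k:ℝ) ≤ n := by exact_mod_cast Nat.lt_succ_iff.1 this
          linarith
        have h1 : (0:ℝ) ≤ t * k / ((n:ℝ) + 1) := by positivity
        have h2 : t * k / ((n:ℝ) + 1) ≤ t * ((k:ℝ) + 1) / ((n:ℝ) + 1) := by
          rw [div_le_div_iff₀ hn1 hn1]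
          nlinarith [mul_nonneg ht0 hn1.le]
        have h3 : t * ((k:ℝ) + 1) / ((n:ℝ) + 1) ≤ T := by
          have h3' : t * ((k:ℝ) + 1) / ((n:ℝ) + 1) ≤ t := by
            rw [div_le_iff₀ hn1]
            nlinarith
          linarith
        have h4 := hD (t * k / ((n:ℝ) + 1)) (t * ((k:ℝ) + 1) / ((n:ℝ) + 1)) h1 h2 h3
        have h5 : t * ((k:ℝ) + 1) / ((n:ℝ) + 1) - t * k / ((n:ℝ) + 1) = t / ((n:ℝ) + 1) := by
          field_simp
          ring
        rw [h5] at h4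
        show ‖F (k + 1) - F k‖ ≤ _
        simp only [hF, Nat.cast_add, Nat.cast_one]
        exact h4
      have hlast : ((n:ℝ) + 1) * (c * (t / ((n:ℝ) + 1)) ^ β)
          = c * t ^ β * ((n:ℝ) + 1) ^ ((1:ℝ) - β) := by
        have hne : ((n:ℝ) + 1) ^ β ≠ 0 := (Real.rpow_pos_of_pos hn1 β).ne'
        rw [Real.div_rpow ht0 hn1.le, Real.rpow_sub hn1, Real.rpow_one]
        field_simp
      calc ‖J t - I t‖ = ‖∑ k ∈ Finset.range (n + 1), (F (k + 1) - F k)‖ := by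
            rw [htel, hFn, hF0, sub_zero]
        _ ≤ ∑ k ∈ Finset.range (n + 1), ‖F (k + 1) - F k‖ := norm_sum_le _ _
        _ ≤ ∑ _k ∈ Finset.range (n + 1), (c * (t / ((n:ℝ) + 1)) ^ β) :=
            Finset.sum_le_sum hterm
        _ = ((n:ℝ) + 1) * (c * (t / ((n:ℝ) + 1)) ^ β) := by
            rw [Finset.sum_const, Finset.card_range, nsmul_eq_mul]
            push_cast
            ring
        _ = c * t ^ β * ((n:ℝ) + 1) ^ ((1:ℝ) - β) := hlast
    have hlim : Tendsto (fun n : ℕ => c * t ^ β * ((n:ℝ) + 1) ^ ((1:ℝ) - β)) atTop (𝓝 0) := by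
      have h1 : Tendsto (fun x : ℝ => x ^ ((1:ℝ) - β)) atTop (𝓝 0) := by
        have heq : (1:ℝ) - β = -(β - 1) := by ring
        rw [heq]
        exact tendsto_rpow_neg_atTop (by linarith)
      have h2 : Tendsto (fun n : ℕ => ((n:ℝ) + 1)) atTop atTop :=
        tendsto_atTop_add_const_right _ 1 tendsto_natCast_atTop_atTop
      have h3 := (h1.comp h2).const_mul (c * t ^ β)
      simpa using h3
    have hle : ‖J t - I t‖ ≤ 0 :=
      le_of_tendsto_of_tendsto' tendsto_const_nhds hlim hbound
    have hz : J t - I t = 0 := norm_le_zero_iff.mp hle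
    exact sub_eq_zero.mp hz
  exact ⟨I, hI0, hmain, ⟨C₁ + 2 ^ β * Z * C₂ * T ^ (β - α), hHolder⟩, huniq⟩
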